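/- Let $V$ be a finite-dimensional vector space over a field $k$ ($k = \mathbb{Q}$ or $\mathbb{C}$), $V_0,\ldots,V_r \subseteq V$ subspaces, and $K$ the kernel of the summation map $V_0 \oplus \cdots \oplus V_r \to V$. Suppose that for general $(m_0,\ldots,m_r) \in K$ and any indices $i,j$, removing $m_i$ and $m_j$ does not decrease the span: $\langle m_l \mid l \neq i,j \rangle_k = \langle m_0,\ldots,m_r \rangle_k$. Fix a general $(m_0,\ldots,m_r) \in K$ and set $V' = \langle m_0,\ldots,m_r \rangle_k$. Then for every $(m'_0,\ldots,m'_r) \in K$, each $m'_i$ lies in $V'$. -/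

import Mathlib

open Module

set_option linter.unusedSectionVars false

section Aux
open Submodule Polynomial

variable {k V : Type*} [Field k] [AddCommGroup V] [Module k V] [FiniteDimensional k V]

lemma exists_dual_family {ι : Type*} [DecidableEq ι] {a : ι → V} (ha : LinearIndependent k a) :
    ∃ f : ι → (V →ₗ[k] k), ∀ i j, f i (a j) = if i = j then 1 else 0 := by
  obtain ⟨q, hq⟩ := Submodule.exists_isCompl (span k (Set.range a))
  let B := Basis.span ha
  refine ⟨fun i => (B.coord i).comp ((span k (Set.range a)).linearProjOfIsCompl q hq), ?_⟩
  intro i j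
  have h0 : ((span k (Set.range a)).linearProjOfIsCompl q hq) (a j) = B j := by
    rw [show a j = ((B j : span k (Set.range a)) : V) from congrArg Subtype.val (Basis.span_apply ha j).symm]
    exact Submodule.linearProjOfIsCompl_apply_left hq (B j)
  simp only [LinearMap.comp_apply, h0, Basis.coord_apply, Basis.repr_self]
  by_cases h : i = j
  · simp [h]
  · simp [Finsupp.single_apply, Ne.symm h, h]

lemma lemB {ι : Type*} [Fintype ι] [DecidableEq ι] {a : ι → V} (ha : LinearIndependent k a)
    (b : ι → V) : {s : k | ¬ LinearIndependent k (fun j => a j + s • b j)}.Finite := by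
  obtain ⟨f, hf⟩ := exists_dual_family ha
  set B : Matrix ι ι k := Matrix.of fun i j => f i (b j) with hB
  set Q : Matrix ι ι k[X] := (1 : Matrix ι ι k[X]) + (Polynomial.X : k[X]) • (B.map Polynomial.C)
    with hQ
  set q : Polynomial k := Matrix.det Q with hqdef
  have hmap : ∀ s : k, Q.map (Polynomial.evalRingHom s) = (1 : Matrix ι ι k) + s • B := by
    intro s
    ext i j
    simp only [hQ, Matrix.map_apply, Matrix.add_apply, Matrix.one_apply, Matrix.smul_apply,
      smul_eq_mul]
    split_ifs <;> simp [mul_comm s]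
  have hdet : ∀ s : k, ((1 : Matrix ι ι k) + s • B).det = q.eval s := by
    intro s
    have h3 := RingHom.map_det (evalRingHom s) Q
    rw [RingHom.mapMatrix_apply, hmap s] at h3
    rw [hqdef, ← coe_evalRingHom]
    exact h3.symm
  have hq0 : q.eval 0 = 1 := by
    rw [← hdet 0]; simp
  have hqne : q ≠ 0 := fun h => by simp [h] at hq0
  apply (q.finite_setOf_isRoot hqne).subset
  intro s hs
  simp only [Set.mem_setOf_eq] at hs ⊢
  by_contra hroot
  apply hs
  have hdetne : ((1 : Matrix ι ι k) + s • B).det ≠ 0 := by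
    rw [hdet]; exact fun h => hroot h
  rw [Fintype.linearIndependent_iff]
  intro c hc i
  have hAc : ((1 : Matrix ι ι k) + s • B).mulVec c = 0 := by
    funext i
    have h2 := congrArg (f i) hc
    simp only [map_sum, map_add, map_smul, map_zero, smul_eq_mul] at h2
    have key : ((1 : Matrix ι ι k) + s • B).mulVec c i
        = ∑ x : ι, c x * ((f i) (a x) + s * (f i) (b x)) := by
      simp only [Matrix.mulVec, dotProduct, Matrix.add_apply, Matrix.smul_apply,
        Matrix.one_apply, smul_eq_mul]
      apply Finset.sum_congr rfl
      intro j _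
      rw [hf i j]
      simp only [hB, Matrix.of_apply]; ring
    rw [Pi.zero_apply, key, h2]
  have := Matrix.eq_zero_of_mulVec_eq_zero hdetne hAc
  exact congrFun this i

lemma coeffs_of_mem_span_image {n : ℕ} (m : Fin n → V) (s : Set (Fin n)) {x : V}
    (hx : x ∈ span k (m '' s)) :
    ∃ c : Fin n → k, (∀ l, l ∉ s → c l = 0) ∧ ∑ l, c l • m l = x := by
  rw [Finsupp.mem_span_image_iff_linearCombination] at hx
  obtain ⟨c, hcs, hcx⟩ := hx
  refine ⟨c, fun l hl => ?_, ?_⟩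
  · by_contra h
    exact hl (hcs (Finsupp.mem_support_iff.mpr h))
  · rw [← hcx, Finsupp.linearCombination_apply, Finsupp.sum_fintype]
    intro l; simp

lemma avoid [Infinite k] {n : ℕ} (m : Fin n → V) (i : Fin n)
    (hrel : ∀ l, l ≠ i → ∃ d : Fin n → k, d i = 0 ∧ d l ≠ 0 ∧ ∑ j, d j • m j = 0) :
    ∀ c : Fin n → k, c i = 0 →
      ∃ c' : Fin n → k, c' i = 0 ∧ (∀ l, l ≠ i → c' l ≠ -1) ∧
        ∑ j, c' j • m j = ∑ j, c j • m j := by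
  classical
  suffices H : ∀ N : ℕ, ∀ c : Fin n → k, c i = 0 →
      (Finset.univ.filter (fun l => l ≠ i ∧ c l = -1)).card ≤ N →
      ∃ c' : Fin n → k, c' i = 0 ∧ (∀ l, l ≠ i → c' l ≠ -1) ∧
        ∑ j, c' j • m j = ∑ j, c j • m j by
    intro c hc
    exact H _ c hc le_rfl
  intro N
  induction N with
  | zero =>
    intro c hci hcard
    refine ⟨c, hci, fun l hl hval => ?_, rfl⟩
    have hmem : l ∈ Finset.univ.filter (fun l => l ≠ i ∧ c l = -1) := by
      simp [hl, hval]
    have := Finset.card_pos.mpr ⟨l, hmem⟩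
    omega
  | succ N ih =>
    intro c hci hcard
    rcases Finset.eq_empty_or_nonempty
        (Finset.univ.filter (fun l => l ≠ i ∧ c l = -1)) with he | ⟨l, hl⟩
    · refine ⟨c, hci, fun l hl hval => ?_, rfl⟩
      have hmem : l ∈ Finset.univ.filter (fun l => l ≠ i ∧ c l = -1) := by
        simp [hl, hval]
      rw [he] at hmem
      exact absurd hmem (Finset.notMem_empty l)
    · rw [Finset.mem_filter] at hl
      obtain ⟨-, hli, hcl⟩ := hl
      obtain ⟨d, hdi, hdl, hdsum⟩ := hrel l hli
      obtain ⟨t, ht⟩ := Infinite.exists_notMem_finset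
        (((Finset.univ.filter (fun j => d j ≠ 0)).image (fun j => (-1 - c j) / d j)) ∪ {0})
      set c2 : Fin n → k := fun j => c j + t * d j with hc2
      have htim : ∀ j, d j ≠ 0 → c2 j ≠ -1 := by
        intro j hdj hj2
        apply ht
        apply Finset.mem_union_left
        refine Finset.mem_image.mpr ⟨j, Finset.mem_filter.mpr ⟨Finset.mem_univ j, hdj⟩, ?_⟩
        rw [hc2] at hj2
        field_simp
        linear_combination -hj2
      have hc2i : c2 i = 0 := by simp [hc2, hci, hdi]
      have hsum2 : ∑ j, c2 j • m j = ∑ j, c j • m j := by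
        simp only [hc2, add_smul, Finset.sum_add_distrib]
        rw [show ∑ j, (t * d j) • m j = t • ∑ j, d j • m j by
          rw [Finset.smul_sum]; exact Finset.sum_congr rfl fun j _ => by rw [mul_smul]]
        rw [hdsum, smul_zero, add_zero]
      have hsubset : Finset.univ.filter (fun j => j ≠ i ∧ c2 j = -1) ⊆
          (Finset.univ.filter (fun j => j ≠ i ∧ c j = -1)).erase l := by
        intro j hj
        rw [Finset.mem_filter] at hj
        obtain ⟨-, hji, hj2⟩ := hj
        by_cases hdj : d j = 0
        · have hjc : c j = -1 := by
            rw [hc2] at hj2; simpa [hdj] using hj2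
          have hjl : j ≠ l := by
            rintro rfl; exact hdl hdj
          rw [Finset.mem_erase]
          exact ⟨hjl, by simp [hji, hjc]⟩
        · exact absurd hj2 (htim j hdj)
      have hcard2 : (Finset.univ.filter (fun j => j ≠ i ∧ c2 j = -1)).card ≤ N := by
        have h1 := Finset.card_le_card hsubset
        have h2 : ((Finset.univ.filter (fun j => j ≠ i ∧ c j = -1)).erase l).card
            = (Finset.univ.filter (fun j => j ≠ i ∧ c j = -1)).card - 1 :=
          Finset.card_erase_of_mem (Finset.mem_filter.mpr ⟨Finset.mem_univ l, hli, hcl⟩)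
        have h3 : 0 < (Finset.univ.filter (fun j => j ≠ i ∧ c j = -1)).card :=
          Finset.card_pos.mpr ⟨l, Finset.mem_filter.mpr ⟨Finset.mem_univ l, hli, hcl⟩⟩
        omega
      obtain ⟨c', h1, h2, h3⟩ := ih c2 hc2i hcard2
      exact ⟨c', h1, h2, h3.trans hsum2⟩

variable [Infinite k]

lemma step1 {r : ℕ} (Vs : Fin (r + 1) → Submodule k V)
    (m : Fin (r + 1) → V) (hmV : ∀ i, m i ∈ Vs i) (hmsum : ∑ i, m i = 0)
    (hrem : ∀ i j : Fin (r + 1),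
      Submodule.span k (m '' {l | l ≠ i ∧ l ≠ j}) = Submodule.span k (Set.range m))
    (i : Fin (r + 1)) :
    ∃ mt : Fin (r + 1) → V, (∀ l, mt l ∈ Vs l) ∧ ∑ l, mt l = 0 ∧ mt i = 0 ∧
      Submodule.span k (Set.range mt) = Submodule.span k (Set.range m) := by
  classical
  -- coefficients expressing `m i` in terms of the other `m l`
  have hmi : m i ∈ span k (m '' {l | l ≠ i ∧ l ≠ i}) := by
    rw [hrem i i]; exact subset_span (Set.mem_range_self i)
  obtain ⟨c0, hc0z, hc0sum⟩ := coeffs_of_mem_span_image m _ hmi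
  have hc0i : c0 i = 0 := hc0z i (by simp)
  -- relations with prescribed nonzero coordinatel
  have hrel : ∀ l, l ≠ i → ∃ d : Fin (r+1) → k, d i = 0 ∧ d l ≠ 0 ∧ ∑ j, d j • m j = 0 := by
    intro l hl
    have hml : m l ∈ span k (m '' {j | j ≠ i ∧ j ≠ l}) := by
      rw [hrem i l]; exact subset_span (Set.mem_range_self l)
    obtain ⟨e, hez, hesum⟩ := coeffs_of_mem_span_image m _ hml
    refine ⟨fun j => e j - if j = l then 1 else 0, ?_, ?_, ?_⟩
    · have : e i = 0 := hez i (by simp)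
      simp [this, Ne.symm hl]
    · have : e l = 0 := hez l (by simp)
      simp [this]
    · have hsum : ∑ j, (if j = l then (1:k) else 0) • m j = m l := by
        refine (Finset.sum_eq_single l (fun j _ hj => by rw [if_neg hj, zero_smul])
          (fun h => absurd (Finset.mem_univ l) h)).trans (by rw [if_pos rfl, one_smul])
      simp only [sub_smul, Finset.sum_sub_distrib, hsum, hesum, sub_self]
  obtain ⟨c, hci, hcne, hcsum⟩ := avoid m i hrel c0 hc0i
  rw [hc0sum] at hcsum
  -- the new element
  refine ⟨fun l => if l = i then 0 else (1 + c l) • m l, ?_, ?_, ?_, ?_⟩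
  · intro l
    dsimp only
    by_cases h : l = i
    · rw [if_pos h]; exact Submodule.zero_mem _
    · rw [if_neg h]; exact Submodule.smul_mem _ _ (hmV l)
  · dsimp only
    have hrw : ∀ l, (if l = i then (0:V) else (1 + c l) • m l)
        = (1 + c l) • m l - (if l = i then m i else 0) := by
      intro l
      by_cases h : l = i
      · simp [h, hci]
      · simp [h]
    rw [Finset.sum_congr rfl (fun l _ => hrw l)]
    rw [Finset.sum_sub_distrib]
    have h1 : ∑ l, (if l = i then m i else 0) = m i := by simp [Finset.sum_ite_eq']
    have h2 : ∑ l, (1 + c l) • m l = m i := by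
      rw [Finset.sum_congr rfl (fun l _ => by rw [add_smul, one_smul])]
      rw [Finset.sum_add_distrib, hmsum, hcsum, zero_add]
    rw [h1, h2, sub_self]
  · simp
  · rw [← hrem i i]
    apply le_antisymm
    · rw [span_le]
      rintro _ ⟨l, rfl⟩
      dsimp only
      by_cases h : l = i
      · simp only [h, ite_true]
        exact Submodule.zero_mem _
      · simp only [h, ite_false]
        exact Submodule.smul_mem _ _ (subset_span ⟨l, ⟨h, h⟩, rfl⟩)
    · rw [span_le]
      rintro _ ⟨l, ⟨hl, -⟩, rfl⟩
      have hne : (1 : k) + c l ≠ 0 := by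
        intro h
        exact hcne l hl (by linear_combination h)
      have : m l = (1 + c l)⁻¹ • (if l = i then (0:V) else (1 + c l) • m l) := by
        rw [if_neg hl, inv_smul_smul₀ hne]
      rw [this]
      exact Submodule.smul_mem _ _ (subset_span (Set.mem_range_self l))

end Aux

open Submodule in
/-- Suppose the removal condition (*) holds for a general element of the kernel
`K = {(m₀,…,m_r) | m_i ∈ V_i, ∑ m_i = 0}`.  Fix such a general element `m`: being general, it
attains the maximal span dimension on `K` and satisfies the removal condition.  Then every
element `(m'₀,…,m'_r)` of `K` has all its components in `V' = ⟨m₀,…,m_r⟩`. -/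
theorem stmt2 {k V : Type*} [Field k] [Infinite k] [AddCommGroup V] [Module k V]
    [FiniteDimensional k V] {r : ℕ} (Vs : Fin (r + 1) → Submodule k V)
    (m : Fin (r + 1) → V) (hmV : ∀ i, m i ∈ Vs i) (hmsum : ∑ i, m i = 0)
    -- `m` attains the maximal span dimension `α(V₀,…,V_r)` on `K`
    (hmax : ∀ m' : Fin (r + 1) → V, (∀ i, m' i ∈ Vs i) → ∑ i, m' i = 0 →
      finrank k (Submodule.span k (Set.range m')) ≤ finrank k (Submodule.span k (Set.range m)))
    -- the removal condition (*) holds at `m`: removing any two of the `m_l` keeps the span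
    (hrem : ∀ i j : Fin (r + 1),
      Submodule.span k (m '' {l | l ≠ i ∧ l ≠ j}) = Submodule.span k (Set.range m)) :
    ∀ m' : Fin (r + 1) → V, (∀ i, m' i ∈ Vs i) → ∑ i, m' i = 0 →
      ∀ i, m' i ∈ Submodule.span k (Set.range m) := by
  classical
  intro m' hm'V hm'sum i
  by_contra hni
  obtain ⟨mt, hmtV, hmtsum, hmti, hmtspan⟩ := step1 Vs m hmV hmsum hrem i
  -- b : a basis of V' inside the image of mt
  obtain ⟨b, hbsub, hbspan, hbind⟩ := exists_linearIndependent k (Set.range mt)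
  have hbfin : b.Finite := (Set.finite_range mt).subset hbsub
  haveI : Fintype b := hbfin.fintype
  -- choose preimages
  have hσ : ∀ v : b, ∃ l : Fin (r + 1), mt l = v := fun v => hbsub v.2
  choose σ hσ2 using hσ
  have hfeq : (fun v : b => mt (σ v)) = (fun v : b => (v : V)) := funext fun v => hσ2 v
  have ind0 : LinearIndependent k (fun v : b => mt (σ v)) := by
    rw [hfeq]; exact hbind
  have hrange0 : Set.range (fun v : b => mt (σ v)) = b := by
    rw [hfeq]; exact Subtype.range_coe
  -- option family
  set A : Option b → V := fun o => Option.casesOn' o (m' i) (fun v : b => mt (σ v)) with hA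
  set Bd : Option b → V := fun o => Option.casesOn' o 0 (fun v : b => m' (σ v)) with hBd
  have hAind : LinearIndependent k A :=
    LinearIndependent.option ind0 (by rw [hrange0, hbspan, hmtspan]; exact hni)
  have hfin := lemB hAind Bd
  obtain ⟨s, hs⟩ := (hfin.union (Set.finite_singleton 0)).infinite_compl.nonempty
  simp only [Set.mem_compl_iff, Set.mem_union, Set.mem_singleton_iff, Set.mem_setOf_eq,
    not_or, not_not] at hs
  obtain ⟨hLI, hs0⟩ := hs
  -- the deformed element of K
  set u : Fin (r + 1) → V := fun l => mt l + s • m' l with hu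
  have huV : ∀ l, u l ∈ Vs l := fun l => (Vs l).add_mem (hmtV l) ((Vs l).smul_mem s (hm'V l))
  have husum : ∑ l, u l = 0 := by
    rw [hu]
    simp only [Finset.sum_add_distrib, hmtsum, ← Finset.smul_sum, hm'sum, smul_zero, add_zero]
  -- the restricted family
  have hsub : LinearIndependent k (fun v : b => mt (σ v) + s • m' (σ v)) := by
    have := hLI.comp some (Option.some_injective b)
    convert this using 1
    rfl
  set T : Submodule k V := span k (Set.range (fun v : b => mt (σ v) + s • m' (σ v))) with hT
  have hTle : T ≤ span k (Set.range u) := by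
    rw [hT, span_le]
    rintro _ ⟨v, rfl⟩
    exact subset_span ⟨σ v, rfl⟩
  have hcard : finrank k T = finrank k (span k (Set.range m)) := by
    rw [hT, finrank_span_eq_card hsub]
    rw [← hmtspan, ← hbspan]
    rw [finrank_span_set_eq_card hbind]
    simp [Set.toFinset_card]
  have hrk : finrank k (span k (Set.range u)) ≤ finrank k T := by
    rw [hcard]; exact hmax u huV husum
  have hTeq : T = span k (Set.range u) := Submodule.eq_of_le_of_finrank_le hTle hrk
  -- m' i belongs to T
  have hmem : m' i ∈ T := by
    have h1 : u i ∈ span k (Set.range u) := subset_span (Set.mem_range_self i)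
    rw [← hTeq] at h1
    have h2 : u i = s • m' i := by rw [hu]; simp [hmti]
    rw [h2] at h1
    exact (Submodule.smul_mem_iff _ hs0).mp h1
  -- contradiction with linear independence of the option family
  have := (linearIndependent_option.mp hLI).2
  apply this
  have hcomp : ((fun j => A j + s • Bd j) ∘ (some : b → Option b))
      = (fun v : b => mt (σ v) + s • m' (σ v)) := by
    funext v; simp [hA, hBd]
  have hnone : A none + s • Bd none = m' i := by simp [hA, hBd]
  rw [hcomp, hnone]
  exact hmem
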